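/- Let A be a finite-dimensional algebra over a field, let n ≥ 1, and let 0 → X → Y → Z → 0 be a short exact sequence of finitely generated left A-modules. If both X and Z have dominant dimension at least n, then Y has dominant dimension at least n. (That is, the class Dom_n of modules of dominant dimension at least n is closed under extensions.) -/

import Mathlib

open CategoryTheory Opposite

noncomputable section

/-- `domdimGE B n M` says that the dominant dimension of the `B`-module `M` is at least `n`:
there is an exact sequence `0 → M → I_0 → ⋯ → I_{n-1}` in which every `I_j` is both
projective and injective. -/
def domdimGE (B : Type) [Ring B] : ℕ → ModuleCat B → Prop
  | 0, _ => True
  | n + 1, M => ∃ (I : ModuleCat B) (f : M →ₗ[B] I), Projective I ∧ Injective I ∧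
      Function.Injective f ∧ domdimGE B n (ModuleCat.of B (I ⧸ LinearMap.range f))

lemma domdimGE_ext (A : Type) [Ring A] (n : ℕ) :
    ∀ (X Y Z : Type) [AddCommGroup X] [Module A X] [AddCommGroup Y] [Module A Y]
      [AddCommGroup Z] [Module A Z]
      (f : X →ₗ[A] Y) (g : Y →ₗ[A] Z),
      Function.Injective f → Function.Surjective g →
      LinearMap.range f = LinearMap.ker g →
      domdimGE A n (ModuleCat.of A X) → domdimGE A n (ModuleCat.of A Z) →
      domdimGE A n (ModuleCat.of A Y) := by
  induction n with
  | zero => intros; trivial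
  | succ n ih =>
    intro X Y Z _ _ _ _ _ _ f g hf hg hfg hX hZ
    obtain ⟨I, ι, hIp, hIi, hι, hXq⟩ := hX
    obtain ⟨J, κ, hJp, hJi, hκ, hZq⟩ := hZ
    haveI := hIi; haveI := hIp; haveI := hJi; haveI := hJp
    haveI : Injective (ModuleCat.of A ↑I) := hIi
    have hmono : Mono (show ModuleCat.of A X ⟶ ModuleCat.of A Y from ModuleCat.ofHom f) :=
      (ModuleCat.mono_iff_injective _).mpr hf
    let h : (ModuleCat.of A Y) ⟶ I :=
      Injective.factorThru (show ModuleCat.of A X ⟶ I from ModuleCat.ofHom ι)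
        (show ModuleCat.of A X ⟶ ModuleCat.of A Y from ModuleCat.ofHom f)
    have hcomm : ∀ x : X, h (f x) = ι x := by
      intro x
      have := Injective.comp_factorThru (show ModuleCat.of A X ⟶ I from ModuleCat.ofHom ι)
        (show ModuleCat.of A X ⟶ ModuleCat.of A Y from ModuleCat.ofHom f)
      exact LinearMap.congr_fun (congrArg ModuleCat.Hom.hom this) x
    -- the middle injective-projective object
    let IJ : ModuleCat A := ModuleCat.of A (↑I × ↑J)
    have hIJiso : (I ⊞ J : ModuleCat A) ≅ IJ := ModuleCat.biprodIsoProd I J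
    have hIJp : Projective IJ := Projective.of_iso hIJiso inferInstance
    have hIJi : Injective IJ := Injective.of_iso hIJiso inferInstance
    -- the embedding
    let e : Y →ₗ[A] ↑I × ↑J := LinearMap.prod (h.hom : Y →ₗ[A] ↑I) (κ.comp g)
    have hey : ∀ y : Y, e y = (h y, κ (g y)) := fun _ => rfl
    have he : Function.Injective e := by
      intro y₁ y₂ hy
      have h1 : h y₁ = h y₂ := congrArg Prod.fst hy
      have h2 : κ (g y₁) = κ (g y₂) := congrArg Prod.snd hy
      have h3 : g (y₁ - y₂) = 0 := by
        have := hκ h2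
        simp [map_sub, this, sub_self]
      have hk : y₁ - y₂ ∈ LinearMap.ker g := h3
      rw [← hfg] at hk
      obtain ⟨x, hx⟩ := hk
      have hh : h (f x) = 0 := by rw [hx, map_sub, h1, sub_self]
      rw [hcomm] at hh
      have hx0 : x = 0 := hι (by simpa using hh)
      rw [hx0, map_zero] at hx
      exact sub_eq_zero.mp hx.symm
    refine ⟨IJ, e, hIJp, hIJi, he, ?_⟩
    -- the induced short exact sequence of cokernels
    have hφcond : LinearMap.range ι ≤
        LinearMap.ker ((LinearMap.range e).mkQ.comp (LinearMap.inl A ↑I ↑J)) := by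
      rintro _ ⟨x, rfl⟩
      have hgx : g (f x) = 0 := by
        have : f x ∈ LinearMap.ker g := hfg ▸ LinearMap.mem_range_self f x
        exact this
      simp only [LinearMap.mem_ker, LinearMap.comp_apply, LinearMap.inl_apply,
        Submodule.mkQ_apply, Submodule.Quotient.mk_eq_zero]
      exact ⟨f x, by rw [hey, hcomm, hgx, map_zero]⟩
    let φ : (↑I ⧸ LinearMap.range ι) →ₗ[A] ((↑I × ↑J) ⧸ LinearMap.range e) :=
      Submodule.liftQ _ _ hφcond
    have hψcond : LinearMap.range e ≤
        LinearMap.ker ((LinearMap.range κ).mkQ.comp (LinearMap.snd A ↑I ↑J)) := by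
      rintro _ ⟨y, rfl⟩
      simp only [LinearMap.mem_ker, LinearMap.comp_apply, LinearMap.snd_apply,
        Submodule.mkQ_apply, Submodule.Quotient.mk_eq_zero]
      exact ⟨g y, rfl⟩
    let ψ : ((↑I × ↑J) ⧸ LinearMap.range e) →ₗ[A] (↑J ⧸ LinearMap.range κ) :=
      Submodule.liftQ _ _ hψcond
    have hφinj : Function.Injective φ := by
      rw [injective_iff_map_eq_zero]
      intro a ha
      obtain ⟨i, rfl⟩ := Submodule.Quotient.mk_surjective _ a
      have hmem : ((i, 0) : ↑I × ↑J) ∈ LinearMap.range e := by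
        simpa only [φ, Submodule.liftQ_apply, LinearMap.comp_apply, LinearMap.inl_apply,
          Submodule.mkQ_apply, Submodule.Quotient.mk_eq_zero] using ha
      obtain ⟨y, hy⟩ := hmem
      have hy1 : h y = i := congrArg Prod.fst hy
      have hy2 : κ (g y) = 0 := congrArg Prod.snd hy
      have hgy : g y = 0 := hκ (by simpa using hy2)
      have : y ∈ LinearMap.range f := by rw [hfg]; exact hgy
      obtain ⟨x, hx⟩ := this
      rw [Submodule.Quotient.mk_eq_zero]
      exact ⟨x, by rw [← hcomm, hx, hy1]⟩
    have hψsurj : Function.Surjective ψ := by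
      intro c
      obtain ⟨j, rfl⟩ := Submodule.Quotient.mk_surjective _ c
      exact ⟨Submodule.Quotient.mk ((0, j) : ↑I × ↑J), rfl⟩
    have hφψ : LinearMap.range φ = LinearMap.ker ψ := by
      ext q
      constructor
      · rintro ⟨a, rfl⟩
        obtain ⟨i, rfl⟩ := Submodule.Quotient.mk_surjective _ a
        show ψ (φ (Submodule.Quotient.mk i)) = 0
        simp [φ, ψ, Submodule.liftQ_apply]
      · intro hq
        obtain ⟨⟨i, j⟩, rfl⟩ := Submodule.Quotient.mk_surjective _ q
        have hjm : j ∈ LinearMap.range κ := by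
          have hq' : ψ (Submodule.Quotient.mk (i, j)) = 0 := hq
          simpa only [ψ, Submodule.liftQ_apply, LinearMap.comp_apply, LinearMap.snd_apply,
            Submodule.mkQ_apply, Submodule.Quotient.mk_eq_zero] using hq'
        obtain ⟨z, hz⟩ := hjm
        obtain ⟨y, rfl⟩ := hg z
        refine ⟨Submodule.Quotient.mk (i - h y), ?_⟩
        show Submodule.Quotient.mk ((i - h y, 0) : ↑I × ↑J) = Submodule.Quotient.mk (i, j)
        rw [Submodule.Quotient.eq]
        refine ⟨-y, ?_⟩
        rw [map_neg, hey]
        have : κ (g y) = j := hz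
        apply Prod.ext <;> simp [this]
    exact ih _ _ _ φ ψ hφinj hψsurj hφψ hXq hZq

/-- the class of modules of dominant dimension at least `n` is closed under
extensions: in a short exact sequence `0 → X → Y → Z → 0`, if `X` and `Z` have dominant
dimension at least `n` then so does `Y`. -/
theorem stmt2 (k A : Type) [Field k] [Ring A] [Algebra k A] [FiniteDimensional k A]
    (n : ℕ) (hn : 1 ≤ n)
    (X Y Z : Type) [AddCommGroup X] [Module A X] [Module.Finite A X]
    [AddCommGroup Y] [Module A Y] [Module.Finite A Y]
    [AddCommGroup Z] [Module A Z] [Module.Finite A Z]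
    (f : X →ₗ[A] Y) (g : Y →ₗ[A] Z)
    (hf : Function.Injective f) (hg : Function.Surjective g)
    (hfg : LinearMap.range f = LinearMap.ker g)
    (hX : domdimGE A n (ModuleCat.of A X)) (hZ : domdimGE A n (ModuleCat.of A Z)) :
    domdimGE A n (ModuleCat.of A Y) :=
  domdimGE_ext A n X Y Z f g hf hg hfg hX hZ
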